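/- Let a, b, c, a', b', c' be nonempty finite types; let f₂ : Matrix a a ℂ →ₗ[ℂ] Matrix b b ℂ, f₁ : Matrix b b ℂ →ₗ[ℂ] Matrix c c ℂ, g₂ : Matrix a' a' ℂ →ₗ[ℂ] Matrix b' b' ℂ, g₁ : Matrix b' b' ℂ →ₗ[ℂ] Matrix c' c' ℂ be positive linear maps. Let h₂ : Matrix (a × a') (a × a') ℂ →ₗ[ℂ] Matrix (b × b') (b × b') ℂ and h₁ : Matrix (b × b') (b × b') ℂ →ₗ[ℂ] Matrix (c × c') (c × c') ℂ be positive linear maps satisfying h₂ (x ⊗ₖ y) = f₂ x ⊗ₖ g₂ y for all x : Matrix a a ℂ, y : Matrix a' a' ℂ, and h₁ (x ⊗ₖ y) = f₁ x ⊗ₖ g₁ y for all x : Matrix b b ℂ, y : Matrix b' b' ℂ. Then for all x : Matrix a a ℂ and y : Matrix a' a' ℂ, (h₁ ∘' h₂) (x ⊗ₖ y) = ((f₁ ∘' f₂) x) ⊗ₖ ((g₁ ∘' g₂) y). -/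
import Mathlib


open scoped ComplexOrder Kronecker

/-- The renormalized composition of the category `Mix_sym` of Oreshkov and Cerf:
`f ∘' g := Tr[f(g(𝟙/d))]⁻¹ • (f ∘ₗ g)` when the normalization scalar is nonzero,
and `0` otherwise. -/
noncomputable def rcomp {a b c : Type*} [Fintype a] [Fintype b] [Fintype c] [DecidableEq a]
    (f : Matrix b b ℂ →ₗ[ℂ] Matrix c c ℂ) (g : Matrix a a ℂ →ₗ[ℂ] Matrix b b ℂ) :
    Matrix a a ℂ →ₗ[ℂ] Matrix c c ℂ :=
  if (f (g ((Fintype.card a : ℂ)⁻¹ • (1 : Matrix a a ℂ)))).trace = 0 then 0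
  else ((f (g ((Fintype.card a : ℂ)⁻¹ • (1 : Matrix a a ℂ)))).trace)⁻¹ • (f ∘ₗ g)

/-- Interchange law between the renormalized composition of `Mix_sym` and the
Kronecker (tensor) product: part of the claim that `Mix_sym` is a symmetric
monoidal category. -/
theorem rcomp_kronecker_interchange {a b c a' b' c' : Type*}
    [Fintype a] [Fintype b] [Fintype c] [Fintype a'] [Fintype b'] [Fintype c']
    [Nonempty a] [Nonempty b] [Nonempty c] [Nonempty a'] [Nonempty b'] [Nonempty c']
    [DecidableEq a] [DecidableEq a']
    (f₂ : Matrix a a ℂ →ₗ[ℂ] Matrix b b ℂ)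
    (f₁ : Matrix b b ℂ →ₗ[ℂ] Matrix c c ℂ)
    (g₂ : Matrix a' a' ℂ →ₗ[ℂ] Matrix b' b' ℂ)
    (g₁ : Matrix b' b' ℂ →ₗ[ℂ] Matrix c' c' ℂ)
    (h₂ : Matrix (a × a') (a × a') ℂ →ₗ[ℂ] Matrix (b × b') (b × b') ℂ)
    (h₁ : Matrix (b × b') (b × b') ℂ →ₗ[ℂ] Matrix (c × c') (c × c') ℂ)
    (hf₂ : ∀ M : Matrix a a ℂ, M.PosSemidef → (f₂ M).PosSemidef)
    (hf₁ : ∀ M : Matrix b b ℂ, M.PosSemidef → (f₁ M).PosSemidef)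
    (hg₂ : ∀ M : Matrix a' a' ℂ, M.PosSemidef → (g₂ M).PosSemidef)
    (hg₁ : ∀ M : Matrix b' b' ℂ, M.PosSemidef → (g₁ M).PosSemidef)
    (hh₂ : ∀ M : Matrix (a × a') (a × a') ℂ, M.PosSemidef → (h₂ M).PosSemidef)
    (hh₁ : ∀ M : Matrix (b × b') (b × b') ℂ, M.PosSemidef → (h₁ M).PosSemidef)
    (hten₂ : ∀ (x : Matrix a a ℂ) (y : Matrix a' a' ℂ), h₂ (x ⊗ₖ y) = f₂ x ⊗ₖ g₂ y)
    (hten₁ : ∀ (x : Matrix b b ℂ) (y : Matrix b' b' ℂ), h₁ (x ⊗ₖ y) = f₁ x ⊗ₖ g₁ y) :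
    ∀ (x : Matrix a a ℂ) (y : Matrix a' a' ℂ),
      (rcomp h₁ h₂) (x ⊗ₖ y) = ((rcomp f₁ f₂) x) ⊗ₖ ((rcomp g₁ g₂) y) := by
  intro x y
  have key : h₁ (h₂ ((Fintype.card (a × a') : ℂ)⁻¹ • (1 : Matrix (a × a') (a × a') ℂ))) =
      (f₁ (f₂ ((Fintype.card a : ℂ)⁻¹ • 1))) ⊗ₖ (g₁ (g₂ ((Fintype.card a' : ℂ)⁻¹ • 1))) := by
    have h1 : ((Fintype.card (a × a') : ℂ)⁻¹ • (1 : Matrix (a × a') (a × a') ℂ)) =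
        (((Fintype.card a : ℂ)⁻¹ • (1 : Matrix a a ℂ)) ⊗ₖ
          (((Fintype.card a' : ℂ)⁻¹ • (1 : Matrix a' a' ℂ)))) := by
      rw [Matrix.smul_kronecker, Matrix.kronecker_smul, Matrix.one_kronecker_one, smul_smul,
        Fintype.card_prod, Nat.cast_mul, mul_inv]
    rw [h1, hten₂, hten₁]
  have keytr : (h₁ (h₂ ((Fintype.card (a × a') : ℂ)⁻¹ • (1 : Matrix (a × a') (a × a') ℂ)))).trace =
      (f₁ (f₂ ((Fintype.card a : ℂ)⁻¹ • 1))).trace * (g₁ (g₂ ((Fintype.card a' : ℂ)⁻¹ • 1))).trace := by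
    rw [key, Matrix.trace_kronecker]
  unfold rcomp
  by_cases hf : (f₁ (f₂ ((Fintype.card a : ℂ)⁻¹ • 1))).trace = 0
  · have hz : (h₁ (h₂ ((Fintype.card (a × a') : ℂ)⁻¹ • (1 : Matrix (a × a') (a × a') ℂ)))).trace = 0 := by
      rw [keytr, hf, zero_mul]
    rw [if_pos hz, if_pos hf]
    simp
  by_cases hg : (g₁ (g₂ ((Fintype.card a' : ℂ)⁻¹ • 1))).trace = 0
  · have hz : (h₁ (h₂ ((Fintype.card (a × a') : ℂ)⁻¹ • (1 : Matrix (a × a') (a × a') ℂ)))).trace = 0 := by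
      rw [keytr, hg, mul_zero]
    rw [if_pos hz, if_neg hf, if_pos hg]
    simp
  have hh : (h₁ (h₂ ((Fintype.card (a × a') : ℂ)⁻¹ • (1 : Matrix (a × a') (a × a') ℂ)))).trace ≠ 0 := by
    rw [keytr]; exact mul_ne_zero hf hg
  rw [if_neg hh, if_neg hf, if_neg hg, keytr]
  simp only [LinearMap.smul_apply, LinearMap.coe_comp, Function.comp_apply, hten₂, hten₁,
    mul_inv, Matrix.smul_kronecker, Matrix.kronecker_smul, smul_smul]
  rw [mul_comm]
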